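/- Let B be an n×n Hermitian positive definite complex matrix with B̂ = D_B^{-1/2} B D_B^{-1/2} its diagonal normalization (D_B the diagonal matrix of diagonal entries of B). Then Γ(B) := tr(B̂^{-1}) − n ≥ 0, with equality Γ(B) = 0 if and only if B is a diagonal matrix. -/

import Mathlib

open Matrix
open scoped ComplexOrder

noncomputable section

/-- `D_B^{1/2}`: the diagonal matrix whose entries are the square roots of the
diagonal entries of `B`. -/
def sqrtDiag {n : ℕ} (B : Matrix (Fin n) (Fin n) ℂ) : Matrix (Fin n) (Fin n) ℂ :=
  Matrix.diagonal fun i => (Real.sqrt (B i i).re : ℂ)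

/-- The diagonal normalization `B̂ = D_B^{-1/2} B D_B^{-1/2}`. -/
def hatM {n : ℕ} (B : Matrix (Fin n) (Fin n) ℂ) : Matrix (Fin n) (Fin n) ℂ :=
  (sqrtDiag B)⁻¹ * B * (sqrtDiag B)⁻¹

/-- The potential function `Γ(B) = tr(B̂⁻¹) − n` (a real number for Hermitian
positive definite `B`). -/
def Gamma {n : ℕ} (B : Matrix (Fin n) (Fin n) ℂ) : ℝ :=
  (Matrix.trace ((hatM B)⁻¹)).re - n

/-- Conjugation by a unitary preserves the trace. -/
lemma trace_unitary_conj {n : ℕ} (U : Matrix.unitaryGroup (Fin n) ℂ)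
    (D : Matrix (Fin n) (Fin n) ℂ) :
    Matrix.trace ((U : Matrix (Fin n) (Fin n) ℂ) * D * star (U : Matrix (Fin n) (Fin n) ℂ))
      = D.trace := by
  rw [Matrix.trace_mul_cycle, U.2.1, Matrix.one_mul]

lemma sum_inv_sub_card {n : ℕ} (lam : Fin n → ℝ) (hpos : ∀ i, 0 < lam i)
    (hsum : ∑ i, lam i = n) :
    (∑ i, (lam i)⁻¹) - n = ∑ i, (lam i - 1) ^ 2 / lam i := by
  have h : ∀ i : Fin n, (lam i - 1) ^ 2 / lam i = (lam i)⁻¹ + lam i - 2 := by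
    intro i
    rw [div_eq_iff (hpos i).ne']
    have h1 : (lam i)⁻¹ * lam i = 1 := inv_mul_cancel₀ (hpos i).ne'
    linear_combination -h1
  have h2 : ∑ i, ((lam i)⁻¹ + lam i - 2) = (∑ i, (lam i)⁻¹) + (∑ i, lam i) - 2 * n := by
    rw [Finset.sum_sub_distrib, Finset.sum_add_distrib]
    simp [mul_comm]
  rw [Finset.sum_congr rfl fun i _ => h i, h2, hsum]
  ring

/-- For an `n × n` Hermitian positive definite complex matrix `B`,
`Γ(B) = tr(B̂⁻¹) − n ≥ 0`, with `Γ(B) = 0` if and only if `B` is diagonal. -/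
theorem gamma_nonneg_and_eq_zero_iff_isDiag {n : ℕ} (B : Matrix (Fin n) (Fin n) ℂ)
    (hB : B.PosDef) :
    0 ≤ Gamma B ∧ (Gamma B = 0 ↔ B.IsDiag) := by
  classical
  -- the diagonal entries of B are positive reals
  have hdiag : ∀ i, 0 < (B i i).re := by
    intro i
    have hne : (Pi.single i 1 : Fin n → ℂ) ≠ 0 := by
      intro h
      have := congrFun h i
      simp at this
    have h1 := hB.re_dotProduct_pos hne
    have h2 : star (Pi.single i 1 : Fin n → ℂ) ⬝ᵥ (B *ᵥ Pi.single i 1) = B i i := by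
      simp [dotProduct, mulVec, Pi.single_apply, mul_ite, ite_and]
    rwa [h2] at h1
  set s : Fin n → ℝ := fun i => Real.sqrt ((B i i).re) with hs_def
  have hs_pos : ∀ i, 0 < s i := fun i => Real.sqrt_pos.mpr (hdiag i)
  have hs_ne : ∀ i, (s i : ℂ) ≠ 0 := fun i => by
    exact_mod_cast (hs_pos i).ne'
  -- inverse of sqrtDiag B
  have hSinv : (sqrtDiag B)⁻¹ = Matrix.diagonal (fun i => ((s i : ℂ))⁻¹) := by
    apply Matrix.inv_eq_right_inv
    rw [sqrtDiag, Matrix.diagonal_mul_diagonal]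
    rw [show (fun i => (Real.sqrt ((B i i).re) : ℂ) * ((s i : ℂ))⁻¹) = fun _ => (1 : ℂ) from
      funext fun i => mul_inv_cancel₀ (hs_ne i), Matrix.diagonal_one]
  have hSdet : IsUnit (sqrtDiag B).det := by
    rw [sqrtDiag, Matrix.det_diagonal]
    exact isUnit_iff_ne_zero.mpr (Finset.prod_ne_zero_iff.mpr fun i _ => hs_ne i)
  set A : Matrix (Fin n) (Fin n) ℂ := hatM B with hA_def
  have hA_apply : ∀ i j, A i j = (s i : ℂ)⁻¹ * B i j * (s j : ℂ)⁻¹ := by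
    intro i j
    simp [hA_def, hatM, hSinv, Matrix.diagonal_mul, Matrix.mul_diagonal]
  have hBdiag : ∀ i, B i i = ((B i i).re : ℂ) := fun i =>
    (hB.isHermitian.coe_re_apply_self i).symm
  have hss : ∀ i, ((B i i).re : ℂ) = (s i : ℂ) * (s i : ℂ) := by
    intro i
    rw [← Complex.ofReal_mul, hs_def]
    norm_cast
    rw [Real.mul_self_sqrt (hdiag i).le]
  have hA_diag : ∀ i, A i i = 1 := by
    intro i
    rw [hA_apply, hBdiag i, hss i]
    field_simp
    exact div_self (hs_ne i)
  have hherm : ((sqrtDiag B)⁻¹)ᴴ = (sqrtDiag B)⁻¹ := by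
    rw [hSinv]
    ext i j
    by_cases h : i = j
    · subst h
      simp [Matrix.conjTranspose_apply, Complex.conj_ofReal]
    · have h' : ¬ j = i := fun hc => h hc.symm
      simp [Matrix.conjTranspose_apply, Matrix.diagonal_apply, h, h']
  -- A is positive definite
  have hA_pd : A.PosDef := by
    rw [Matrix.posDef_iff_dotProduct_mulVec]
    constructor
    · have hAe : A = ((sqrtDiag B)⁻¹)ᴴ * B * (sqrtDiag B)⁻¹ := by rw [hherm]; rfl
      rw [hAe]
      exact Matrix.isHermitian_conjTranspose_mul_mul _ hB.isHermitian
    · intro x hx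
      have hx' : (sqrtDiag B)⁻¹ *ᵥ x ≠ 0 := by
        obtain ⟨i, hi⟩ := Function.ne_iff.mp hx
        intro hcon
        have h2 := congrFun hcon i
        rw [hSinv] at h2
        simp only [Matrix.mulVec_diagonal, Pi.zero_apply] at h2
        exact hi ((mul_eq_zero.mp h2).resolve_left (inv_ne_zero (hs_ne i)))
      have key : star x ⬝ᵥ (A *ᵥ x)
          = star ((sqrtDiag B)⁻¹ *ᵥ x) ⬝ᵥ (B *ᵥ ((sqrtDiag B)⁻¹ *ᵥ x)) := by
        rw [hA_def, hatM, show (sqrtDiag B)⁻¹ * B * (sqrtDiag B)⁻¹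
            = ((sqrtDiag B)⁻¹)ᴴ * B * (sqrtDiag B)⁻¹ by rw [hherm]]
        simp only [star_mulVec, ← Matrix.mulVec_mulVec, Matrix.dotProduct_mulVec,
          Matrix.vecMul_vecMul]
      rw [key]
      exact hB.dotProduct_mulVec_pos hx'
  -- spectral decomposition of A
  have hAh : A.IsHermitian := hA_pd.1
  set V : Matrix (Fin n) (Fin n) ℂ := (hAh.eigenvectorUnitary : Matrix (Fin n) (Fin n) ℂ)
    with hV_def
  set lam : Fin n → ℝ := hAh.eigenvalues with hlam_def
  have hlam_pos : ∀ i, 0 < lam i := hA_pd.eigenvalues_pos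
  have hVV : star V * V = 1 := hAh.eigenvectorUnitary.2.1
  have hVV' : V * star V = 1 := hAh.eigenvectorUnitary.2.2
  have hspec : A = V * Matrix.diagonal (RCLike.ofReal ∘ lam) * star V := hAh.spectral_theorem
  set D' : Matrix (Fin n) (Fin n) ℂ :=
    Matrix.diagonal (RCLike.ofReal ∘ fun i => (lam i)⁻¹) with hD'_def
  have hDD' : Matrix.diagonal (RCLike.ofReal ∘ lam) * D' = 1 := by
    rw [hD'_def, Matrix.diagonal_mul_diagonal]
    rw [show (fun i => (RCLike.ofReal ∘ lam) i * (RCLike.ofReal ∘ fun i => (lam i)⁻¹) i)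
        = fun _ => (1 : ℂ) from funext fun i => by
      simp only [Function.comp_apply, ← RCLike.ofReal_mul,
        mul_inv_cancel₀ (hlam_pos i).ne', RCLike.ofReal_one], Matrix.diagonal_one]
  have hAinv : A⁻¹ = V * D' * star V := by
    apply Matrix.inv_eq_right_inv
    conv_lhs => rw [hspec]
    simp only [Matrix.mul_assoc]
    rw [← Matrix.mul_assoc (star V) V, hVV, Matrix.one_mul,
      ← Matrix.mul_assoc (Matrix.diagonal (RCLike.ofReal ∘ lam)) D', hDD', Matrix.one_mul, hVV']
  -- trace computations
  have htrAinv : (Matrix.trace (A⁻¹)).re = ∑ i, (lam i)⁻¹ := by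
    rw [hAinv, trace_unitary_conj hAh.eigenvectorUnitary, hD'_def, Matrix.trace_diagonal,
      Complex.re_sum]
    exact Finset.sum_congr rfl fun i _ => by simp
  have hsum_lam : ∑ i, lam i = n := by
    have h1 : Matrix.trace A = ∑ i, ((lam i : ℂ)) := by
      conv_lhs => rw [hspec]
      rw [trace_unitary_conj hAh.eigenvectorUnitary, Matrix.trace_diagonal]
      exact Finset.sum_congr rfl fun i _ => by simp
    have h2 : Matrix.trace A = (n : ℂ) := by
      rw [Matrix.trace]
      simp [Matrix.diag, hA_diag]
    have h3 := congrArg Complex.re (h1.symm.trans h2)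
    rw [Complex.re_sum] at h3
    simpa using h3
  -- Gamma as a sum of nonnegative terms
  have hGamma : Gamma B = ∑ i, (lam i - 1) ^ 2 / lam i := by
    rw [Gamma, ← hA_def, htrAinv]
    exact sum_inv_sub_card lam hlam_pos hsum_lam
  have hnonneg : 0 ≤ Gamma B := by
    rw [hGamma]
    exact Finset.sum_nonneg fun i _ => div_nonneg (sq_nonneg _) (hlam_pos i).le
  refine ⟨hnonneg, ?_, ?_⟩
  · -- Gamma B = 0 → B diagonal
    intro h0
    rw [hGamma] at h0
    have hterm : ∀ i ∈ Finset.univ, (lam i - 1) ^ 2 / lam i = 0 :=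
      (Finset.sum_eq_zero_iff_of_nonneg fun i _ => div_nonneg (sq_nonneg _) (hlam_pos i).le).mp h0
    have hlam1 : ∀ i, lam i = 1 := by
      intro i
      have := hterm i (Finset.mem_univ i)
      rcases div_eq_zero_iff.mp this with h | h
      · have := pow_eq_zero_iff (n := 2) (by norm_num) |>.mp h
        linarith [sub_eq_zero.mp this]
      · exact absurd h (hlam_pos i).ne'
    have hA1 : A = 1 := by
      rw [hspec, show Matrix.diagonal (RCLike.ofReal ∘ lam) = 1 by
        rw [show (RCLike.ofReal ∘ lam : Fin n → ℂ) = fun _ => 1 from funext fun i => by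
          simp [hlam1 i], Matrix.diagonal_one], Matrix.mul_one, hVV']
    have hBeq : B = sqrtDiag B * A * sqrtDiag B := by
      rw [hA_def, hatM]
      simp only [Matrix.mul_assoc]
      rw [Matrix.nonsing_inv_mul _ hSdet, Matrix.mul_one, ← Matrix.mul_assoc,
        Matrix.mul_nonsing_inv _ hSdet, Matrix.one_mul]
    rw [hBeq, hA1, Matrix.mul_one, sqrtDiag, Matrix.diagonal_mul_diagonal]
    exact Matrix.isDiag_diagonal _
  · -- B diagonal → Gamma B = 0
    intro hd
    have hA1 : A = 1 := by
      ext i j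
      by_cases hij : i = j
      · subst hij
        rw [hA_diag i, Matrix.one_apply_eq]
      · rw [hA_apply, hd hij, Matrix.one_apply_ne hij]
        ring
    rw [Gamma, ← hA_def, hA1, inv_one, Matrix.trace_one]
    simp
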